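/- Let p > 1, a < 0 and b ≥ −p. Assume (f,g) ∈ C²(ℝ)×C¹(ℝ) with supp f, supp g ⊂ {x : |x| ≤ R}, R ≥ 1, and ∫_ℝ g(x)dx > 0. Then there exist constants ε₂ = ε₂(g,p,a,b,R) > 0 and C > 0 independent of ε such that for every 0 < ε ≤ ε₂ and every T ≥ C ε^{−(p−1)/(−a)}, there is no continuous solution U ∈ C(ℝ×[0,T]) with supp U ⊂ {(x,t) : |x| ≤ t+R} of the integral equation U = ε u_t⁰ + L'_{a,b}(|U|^p). -/

import Mathlib

open MeasureTheory Set
open scoped Classical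

/-- Japanese bracket `⟨x⟩ = √(1+x²)`. -/
noncomputable def jb (x : ℝ) : ℝ := Real.sqrt (1 + x ^ 2)

/-- The operator `L'_{a,b}`. -/
noncomputable def Lab' (a b : ℝ) (v : ℝ → ℝ → ℝ) (x t : ℝ) : ℝ :=
    (1 / 2) * (∫ s in (0:ℝ)..t,
      v (x + t - s) s /
        (jb (s + jb (x + t - s)) ^ (1 + a) * jb (s - jb (x + t - s)) ^ (1 + b)))
  + (1 / 2) * (∫ s in (0:ℝ)..t,
      v (x - t + s) s /
        (jb (s + jb (x - t + s)) ^ (1 + a) * jb (s - jb (x - t + s)) ^ (1 + b)))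

/-- `u_t⁰(x,t) = (1/2){f'(x+t) − f'(x−t) + g(x+t) + g(x−t)}`. -/
noncomputable def ut0 (f g : ℝ → ℝ) (x t : ℝ) : ℝ :=
  (1 / 2) * (deriv f (x + t) - deriv f (x - t) + g (x + t) + g (x - t))

/-- Indicator `χ(x,t)` of the region `t − |x| > R`. -/
noncomputable def chiR (R x t : ℝ) : ℝ := if R < t - |x| then 1 else 0

/-- The weight function `w(x,t)`. -/
noncomputable def wgt (a R x t : ℝ) : ℝ :=
  if 0 < a then chiR R x t * (1 + t - |x|) ^ (1 + a) + (1 - chiR R x t)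
  else if a = 0 then
    chiR R x t * (1 + t - |x|) + (1 - chiR R x t) / Real.log (t + |x| + R)
  else if -1 ≤ a then
    chiR R x t * (1 + t - |x|) ^ (1 + a) + (1 - chiR R x t) * (t + |x| + R) ^ a
  else chiR R x t * (1 + t + |x|) ^ (1 + a) + (1 - chiR R x t) * (t + |x| + R) ^ a

/-- The weighted sup-norm `‖U‖ = sup_{ℝ×[0,T]} |w(x,t)U(x,t)|`. -/
noncomputable def wnorm (a R T : ℝ) (U : ℝ → ℝ → ℝ) : ℝ :=
  ⨆ q : ℝ × Set.Icc (0:ℝ) T, |wgt a R q.1 (q.2 : ℝ) * U q.1 (q.2 : ℝ)|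

/-- The quantity `E_{a,b}(T)`. -/
noncomputable def Eab (p a b R T : ℝ) : ℝ :=
  if 0 < a ∧ 0 < p * (1 + a) + b then 1
  else if a = 0 ∧ -p ≤ b then Real.log (T + 3 * R) ^ p
  else if 0 < a ∧ p * (1 + a) + b = 0 then Real.log (T + 3 * R)
  else if a < 0 ∧ -p ≤ b then (T + 2 * R) ^ (-(a * p))
  else (T + 2 * R) ^ (-(p * (1 + a)) - b)

/-- The quantity `D_a(T)`. -/
noncomputable def Da (a R T : ℝ) : ℝ :=
  if 0 < a then 1
  else if a = 0 then Real.log (T + 3 * R)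
  else (T + 2 * R) ^ (-a)

/-- The five regimes of parameters `(a,b)` appearing in the lifespan estimates. -/
def Regime (p a b : ℝ) : Prop :=
  (0 < a ∧ 0 < p * (1 + a) + b) ∨ (a = 0 ∧ -p ≤ b) ∨
  (0 < a ∧ p * (1 + a) + b = 0) ∨ (a < 0 ∧ -p ≤ b) ∨
  (p * (1 + a) + b < 0 ∧ b < -p)

/-- `u` is a classical solution of the IVP
`u_tt − u_xx = |u_t|^p / (⟨t+⟨x⟩⟩^{1+a}⟨t−⟨x⟩⟩^{1+b})` on `ℝ × [0,T]`
with data `u(x,0) = εf(x)`, `u_t(x,0) = εg(x)`. -/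
def IsClassicalSol (p a b ε T : ℝ) (f g : ℝ → ℝ) (u : ℝ → ℝ → ℝ) : Prop :=
  ContDiffOn ℝ 2 (fun q : ℝ × ℝ => u q.1 q.2)
    ((Set.univ : Set ℝ) ×ˢ Set.Icc (0:ℝ) T) ∧
  (∀ x t : ℝ, 0 < t → t < T →
    deriv (deriv (fun τ => u x τ)) t - deriv (deriv (fun y => u y t)) x
      = |deriv (fun τ => u x τ) t| ^ p /
          (jb (t + jb x) ^ (1 + a) * jb (t - jb x) ^ (1 + b))) ∧
  (∀ x : ℝ, u x 0 = ε * f x) ∧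
  (∀ x : ℝ, deriv (fun τ => u x τ) 0 = ε * g x)

/-- `U` is a continuous solution, supported in `{|x| ≤ t+R}`, of the integral
equation `U = ε u_t⁰ + L'_{a,b}(|U|^p)` on `ℝ × [0,T]`. -/
def IsIntSol (p a b R ε T : ℝ) (f g : ℝ → ℝ) (U : ℝ → ℝ → ℝ) : Prop :=
  ContinuousOn (fun q : ℝ × ℝ => U q.1 q.2)
    ((Set.univ : Set ℝ) ×ˢ Set.Icc (0:ℝ) T) ∧
  (∀ x t : ℝ, 0 ≤ t → t ≤ T → t + R < |x| → U x t = 0) ∧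
  (∀ x t : ℝ, 0 ≤ t → t ≤ T →
    U x t = ε * ut0 f g x t + Lab' a b (fun y s => |U y s| ^ p) x t)


section AuxBlowup

open intervalIntegral

lemma jb_pos (x : ℝ) : 0 < jb x := Real.sqrt_pos.mpr (by positivity)
lemma one_le_jb (x : ℝ) : 1 ≤ jb x :=
  Real.le_sqrt_of_sq_le (by nlinarith [sq_nonneg x])
lemma abs_le_jb (x : ℝ) : |x| ≤ jb x := by
  rw [jb, show |x| = Real.sqrt (x ^ 2) from (Real.sqrt_sq_eq_abs x).symm]
  exact Real.sqrt_le_sqrt (by nlinarith)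
lemma jb_le (x : ℝ) : jb x ≤ 1 + |x| := by
  rw [jb]
  apply (Real.sqrt_le_left (x := 1 + x^2) (y := 1 + |x|) (by positivity)).mpr
  nlinarith [abs_nonneg x, sq_abs x]
lemma continuous_jb : Continuous jb := by
  apply Real.continuous_sqrt.comp; continuity

/-- The weight denominator along the characteristic `x - t = ξ`. -/
noncomputable def Wden (a b ξ s : ℝ) : ℝ :=
  jb (s + jb (ξ + s)) ^ (1 + a) * jb (s - jb (ξ + s)) ^ (1 + b)

lemma Wden_pos (a b ξ s : ℝ) : 0 < Wden a b ξ s :=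
  mul_pos (Real.rpow_pos_of_pos (jb_pos _) _) (Real.rpow_pos_of_pos (jb_pos _) _)

noncomputable def Kc (a b R : ℝ) : ℝ := (R+3) ^ max (1+a) 0 * (R+2) ^ max (1+b) 0

lemma Kc_pos (a b R : ℝ) (hR : 1 ≤ R) : 0 < Kc a b R :=
  mul_pos (Real.rpow_pos_of_pos (by linarith) _) (Real.rpow_pos_of_pos (by linarith) _)

lemma Wden_le (a b R s ξ : ℝ) (hR : 1 ≤ R) (hs : 0 ≤ s) (hξ : |ξ| ≤ R) :
    Wden a b ξ s ≤ Kc a b R * (1 + s) ^ (1 + a) := by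
  have h1s : (0:ℝ) < 1 + s := by linarith
  set y := ξ + s with hy
  have hyabs : |y| ≤ s + R := by
    rw [hy]; calc |ξ + s| ≤ |ξ| + |s| := abs_add_le _ _
    _ ≤ s + R := by rw [abs_of_nonneg hs]; linarith
  have hB1lb : 1 + s ≤ jb (s + jb y) := by
    have h1 : s + jb y ≤ |s + jb y| := le_abs_self _
    have := abs_le_jb (s + jb y)
    have := one_le_jb y
    linarith
  have hB1ub : jb (s + jb y) ≤ (R+3) * (1 + s) := by
    have h1 : jb (s + jb y) ≤ 1 + |s + jb y| := jb_le _
    have h2 : |s + jb y| = s + jb y := abs_of_nonneg (by have := jb_pos y; linarith)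
    have h3 : jb y ≤ 1 + |y| := jb_le y
    nlinarith
  have hf1 : jb (s + jb y) ^ (1+a) ≤ (R+3) ^ max (1+a) 0 * (1+s)^(1+a) := by
    rcases le_or_gt 0 (1+a) with hc | hc
    · rw [max_eq_left hc, ← Real.mul_rpow (by linarith) (by linarith)]
      exact Real.rpow_le_rpow (jb_pos _).le hB1ub hc
    · rw [max_eq_right hc.le, Real.rpow_zero, one_mul]
      exact Real.rpow_le_rpow_of_nonpos h1s hB1lb hc.le
  have hB2 : |s - jb y| ≤ R + 1 := by
    rw [abs_le]
    constructor
    · have := jb_le y; have := abs_nonneg y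
      have : jb y ≤ 1 + s + R := by have := jb_le y; linarith
      linarith
    · have h1 : |y| ≤ jb y := abs_le_jb y
      have h2 : y ≤ |y| := le_abs_self y
      have h3 : -R ≤ ξ := neg_le_of_abs_le hξ
      have : s - jb y ≤ s - y := by linarith
      rw [hy] at this; linarith
  have hf2 : jb (s - jb y) ^ (1+b) ≤ (R+2) ^ max (1+b) 0 := by
    rcases le_or_gt 0 (1+b) with hc | hc
    · rw [max_eq_left hc]
      have : jb (s - jb y) ≤ R + 2 := by have := jb_le (s - jb y); linarith
      exact Real.rpow_le_rpow (jb_pos _).le this hc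
    · rw [max_eq_right hc.le, Real.rpow_zero]
      calc jb (s - jb y) ^ (1+b) ≤ 1 ^ (1+b) :=
            Real.rpow_le_rpow_of_nonpos one_pos (one_le_jb _) hc.le
      _ = 1 := Real.one_rpow _
  calc Wden a b ξ s ≤ ((R+3) ^ max (1+a) 0 * (1+s)^(1+a)) * ((R+2) ^ max (1+b) 0) := by
        apply mul_le_mul hf1 hf2 (le_of_lt (Real.rpow_pos_of_pos (jb_pos _) _)) (by positivity)
  _ = Kc a b R * (1 + s) ^ (1 + a) := by rw [Kc]; ring

lemma continuousOn_param_integral {F : ℝ → ℝ → ℝ} {s : Set ℝ} {A B : ℝ}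
    (hAB : A ≤ B) (hcs : IsCompact s)
    (hF : ContinuousOn (fun q : ℝ × ℝ => F q.1 q.2) (s ×ˢ Icc A B)) :
    ContinuousOn (fun x => ∫ y in A..B, F x y) s := by
  intro x₀ hx₀
  obtain ⟨M, hM⟩ := (hcs.prod isCompact_Icc).exists_bound_of_continuousOn hF
  apply intervalIntegral.continuousWithinAt_of_dominated_interval
    (bound := fun _ => M)
  · filter_upwards [self_mem_nhdsWithin] with x hx
    apply ContinuousOn.aestronglyMeasurable _ measurableSet_uIoc
    intro y hy
    have hy' : y ∈ Icc A B := by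
      rw [uIoc_of_le hAB] at hy; exact Ioc_subset_Icc_self hy
    have h2 : ContinuousWithinAt (fun q : ℝ × ℝ => F q.1 q.2) (s ×ˢ Icc A B) (x, y) :=
      hF _ ⟨hx, hy'⟩
    exact h2.comp (f := fun y : ℝ => ((x, y) : ℝ × ℝ))
      (Continuous.continuousWithinAt (by continuity))
      (fun z hz => ⟨hx, by rw [uIoc_of_le hAB] at hz; exact Ioc_subset_Icc_self hz⟩)
  · filter_upwards [self_mem_nhdsWithin] with x hx
    filter_upwards [] with y
    intro hy
    have hy' : y ∈ Icc A B := by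
      rw [uIoc_of_le hAB] at hy; exact Ioc_subset_Icc_self hy
    exact hM (x, y) ⟨hx, hy'⟩
  · exact intervalIntegrable_const
  · filter_upwards [] with y
    intro hy
    have hy' : y ∈ Icc A B := by
      rw [uIoc_of_le hAB] at hy; exact Ioc_subset_Icc_self hy
    have h2 : ContinuousWithinAt (fun q : ℝ × ℝ => F q.1 q.2) (s ×ˢ Icc A B) (x₀, y) :=
      hF _ ⟨hx₀, hy'⟩
    exact h2.comp (f := fun x : ℝ => ((x, y) : ℝ × ℝ))
      (Continuous.continuousWithinAt (by continuity))
      (fun z hz => ⟨hz, hy'⟩)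

lemma integral_integral_swap_cont {G : ℝ → ℝ → ℝ} {A B C D : ℝ}
    (hAB : A ≤ B) (hCD : C ≤ D)
    (hG : ContinuousOn (fun q : ℝ × ℝ => G q.1 q.2) (Icc A B ×ˢ Icc C D)) :
    ∫ x in A..B, (∫ y in C..D, G x y) = ∫ y in C..D, (∫ x in A..B, G x y) := by
  have hint : Integrable (Function.uncurry G)
      ((volume.restrict (Ioc A B)).prod (volume.restrict (Ioc C D))) := by
    rw [Measure.prod_restrict]
    apply (IntegrableOn.mono_set _ (prod_mono Ioc_subset_Icc_self Ioc_subset_Icc_self))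
    exact hG.integrableOn_compact (isCompact_Icc.prod isCompact_Icc)
  have := MeasureTheory.integral_integral_swap hint
  simp only [intervalIntegral.integral_of_le hAB, intervalIntegral.integral_of_le hCD]
  exact this

lemma jensen_rpow {p R : ℝ} (hp : 1 ≤ p) (hR : 0 < R) {f : ℝ → ℝ}
    (hfc : ContinuousOn f (Icc (-R) R)) (hf0 : ∀ x, 0 ≤ f x) :
    (∫ ξ in (-R)..R, f ξ) ^ p ≤ (2*R) ^ (p-1) * ∫ ξ in (-R)..R, f ξ ^ p := by
  have hRR : -R ≤ R := by linarith
  set μ := volume.restrict (Ioc (-R) R) with hμ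
  have hμuniv : μ univ = ENNReal.ofReal (2*R) := by
    rw [hμ, Measure.restrict_apply_univ, Real.volume_Ioc]
    congr 1; ring
  haveI : IsFiniteMeasure μ := ⟨by rw [hμuniv]; exact ENNReal.ofReal_lt_top⟩
  haveI : NeZero μ := ⟨by
    intro h
    have h0 : μ univ = 0 := by rw [h]; rfl
    rw [hμuniv] at h0
    have : (0:ℝ) < 2*R := by linarith
    simp [ENNReal.ofReal_eq_zero] at *
    linarith⟩
  have hfi : Integrable f μ :=
    (hfc.integrableOn_compact isCompact_Icc).mono_set Ioc_subset_Icc_self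
  have hgi : Integrable (fun x => f x ^ p) μ := by
    have : ContinuousOn (fun x => f x ^ p) (Icc (-R) R) :=
      hfc.rpow_const (fun x _ => Or.inr (by linarith))
    exact (this.integrableOn_compact isCompact_Icc).mono_set Ioc_subset_Icc_self
  have hJ := (convexOn_rpow hp).map_average_le
    (continuousOn_id.rpow_const (fun x _ => Or.inr (by linarith))) isClosed_Ici
    (Filter.Eventually.of_forall (fun x => hf0 x)) hfi hgi
  rw [average_eq, average_eq, measureReal_def, hμuniv, ENNReal.toReal_ofReal (by linarith)] at hJ
  simp only [smul_eq_mul, id_eq] at hJ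
  have hI0 : 0 ≤ ∫ x, f x ∂μ := integral_nonneg (fun x => hf0 x)
  have h2R : (0:ℝ) < 2*R := by linarith
  rw [intervalIntegral.integral_of_le hRR, intervalIntegral.integral_of_le hRR]
  show (∫ x, f x ∂μ) ^ p ≤ (2*R) ^ (p-1) * ∫ x, f x ^ p ∂μ
  have key : ((2*R)⁻¹) ^ p * (∫ x, f x ∂μ) ^ p ≤ (2*R)⁻¹ * ∫ x, f x ^ p ∂μ := by
    rw [← Real.mul_rpow (by positivity) hI0]; exact hJ
  have hcancel : (2*R) ^ p * ((2*R)⁻¹) ^ p = 1 := by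
    rw [← Real.mul_rpow h2R.le (by positivity), mul_inv_cancel₀ h2R.ne', Real.one_rpow]
  calc (∫ x, f x ∂μ) ^ p = (2*R) ^ p * (((2*R)⁻¹) ^ p * (∫ x, f x ∂μ) ^ p) := by
        rw [← mul_assoc, hcancel, one_mul]
  _ ≤ (2*R) ^ p * ((2*R)⁻¹ * ∫ x, f x ^ p ∂μ) := by
        apply mul_le_mul_of_nonneg_left key (le_of_lt (Real.rpow_pos_of_pos h2R _))
  _ = (2*R) ^ (p-1) * ∫ x, f x ^ p ∂μ := by
        rw [Real.rpow_sub h2R, Real.rpow_one]; ring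

end AuxBlowup

set_option maxHeartbeats 4000000 in
theorem blow_up_a_neg (p a b R : ℝ) (f g : ℝ → ℝ)
    (hp : 1 < p) (ha : a < 0) (hb : -p ≤ b)
    (hR : 1 ≤ R) (hf : ContDiff ℝ 2 f) (hg : ContDiff ℝ 1 g)
    (hsf : ∀ x : ℝ, R < |x| → f x = 0) (hsg : ∀ x : ℝ, R < |x| → g x = 0) (hgint : 0 < ∫ x : ℝ, g x) :
    ∃ ε₂ : ℝ, 0 < ε₂ ∧ ∃ C : ℝ, 0 < C ∧ ∀ ε : ℝ, 0 < ε → ε ≤ ε₂ →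
      ∀ T : ℝ, C * ε ^ (-((p - 1) / (-a))) ≤ T →
        ¬ ∃ U : ℝ → ℝ → ℝ, IsIntSol p a b R ε T f g U := by
  have ha0 : (0:ℝ) < -a := by linarith
  have hane : a ≠ 0 := by linarith
  have hp1 : (0:ℝ) < p - 1 := by linarith
  have hR0 : (0:ℝ) < R := by linarith
  have hRR : -R ≤ R := by linarith
  set t₀ : ℝ := R + 1 with ht₀def
  have ht₀pos : (0:ℝ) < t₀ := by rw [ht₀def]; linarith
  set K : ℝ := Kc a b R with hKdef
  have hK : 0 < K := Kc_pos a b R hR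
  set cg : ℝ := (∫ x : ℝ, g x) / 2 with hcgdef
  have hcg : 0 < cg := by rw [hcgdef]; linarith
  set c : ℝ := (2*R) ^ (1-p) / (2*K) with hcdef
  have hc : 0 < c := by
    rw [hcdef]; exact div_pos (Real.rpow_pos_of_pos (by linarith) _) (by linarith)
  set B : ℝ := (-a) * cg ^ (1-p) / ((p-1) * c) with hBdef
  have hB : 0 < B := by
    rw [hBdef]
    exact div_pos (mul_pos ha0 (Real.rpow_pos_of_pos hcg _)) (mul_pos hp1 hc)
  have hXpos : (0:ℝ) < (1+t₀) ^ (-a) + B + 1 := by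
    have := Real.rpow_pos_of_pos (show (0:ℝ) < 1 + t₀ by linarith) (-a)
    linarith
  set C : ℝ := ((1+t₀) ^ (-a) + B + 1) ^ (1/(-a)) with hCdef
  have hCpos : 0 < C := Real.rpow_pos_of_pos hXpos _
  have hCa : C ^ (-a) = (1+t₀) ^ (-a) + B + 1 := by
    rw [hCdef, ← Real.rpow_mul hXpos.le, one_div, inv_mul_cancel₀ (by linarith : (-a) ≠ 0),
      Real.rpow_one]
  refine ⟨1, one_pos, C, hCpos, ?_⟩
  intro ε hε hε1 T hT ⟨U, hUc, hUsupp, hUeq⟩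
  -- basic bounds on T
  have hεm : 1 ≤ ε ^ (-((p - 1) / (-a))) := by
    apply Real.one_le_rpow_of_pos_of_le_one_of_nonpos hε hε1
    rw [neg_nonpos]
    positivity
  have hCT : C ≤ T := by
    calc C = C * 1 := (mul_one C).symm
    _ ≤ C * ε ^ (-((p - 1) / (-a))) := by
        apply mul_le_mul_of_nonneg_left hεm hCpos.le
    _ ≤ T := hT
  have hC1t₀ : 1 + t₀ < C := by
    have h1 : ((1+t₀) ^ (-a)) ^ (1/(-a)) < C := by
      rw [hCdef]
      apply Real.rpow_lt_rpow (by positivity) (by linarith) (by positivity)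
    rw [← Real.rpow_mul (by linarith : (0:ℝ) ≤ 1 + t₀)] at h1
    rw [mul_one_div, div_self (by linarith : (-a) ≠ 0), Real.rpow_one] at h1
    exact h1
  have ht₀T : t₀ ≤ T := by linarith
  have hTpos : 0 < T := by linarith
  -- the basic functions
  set w : ℝ → ℝ := fun s => (1+s) ^ (-1-a) with hwdef
  have hwpos : ∀ s : ℝ, 0 ≤ s → 0 < w s := fun s hs =>
    Real.rpow_pos_of_pos (by linarith) _
  have hwT : ContinuousOn w (Icc 0 T) := by
    apply ContinuousOn.rpow_const (continuous_const.add continuous_id).continuousOn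
    intro z hz
    exact Or.inl (by have := hz.1; intro h0; change (1:ℝ) + z = 0 at h0; linarith)
  set Hf : ℝ → ℝ := fun t => ∫ ξ in (-R)..R, U (ξ+t) t with hHfdef
  set Pf : ℝ → ℝ := fun s => ∫ ξ in (-R)..R, |U (ξ+s) s| ^ p with hPfdef
  have hP0 : ∀ s : ℝ, 0 ≤ Pf s := by
    intro s
    apply intervalIntegral.integral_nonneg hRR
    intro x _
    positivity
  -- continuity facts
  have hUst : ∀ t : ℝ, t ∈ Icc (0:ℝ) T →
      ContinuousOn (fun ξ : ℝ => U (ξ+t) t) univ := by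
    intro t ht
    exact hUc.comp (f := fun ξ : ℝ => ((ξ+t, t) : ℝ × ℝ))
      (Continuous.continuousOn ((continuous_id.add continuous_const).prodMk
        continuous_const)) (fun ξ _ => ⟨mem_univ _, ht⟩)
  have hUst2 : ∀ t : ℝ, t ∈ Icc (0:ℝ) T → ∀ ξ : ℝ,
      ContinuousOn (fun s : ℝ => U (ξ+s) s) (Icc 0 t) := by
    intro t ht ξ
    exact hUc.comp (f := fun s : ℝ => ((ξ+s, s) : ℝ × ℝ))
      (Continuous.continuousOn ((continuous_const.add continuous_id).prodMk
        continuous_id))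
      (fun s hs => ⟨mem_univ _, ⟨hs.1, hs.2.trans ht.2⟩⟩)
  have hFrect : ∀ t : ℝ, t ∈ Icc (0:ℝ) T →
      ContinuousOn (fun q : ℝ × ℝ => |U (q.1 + q.2) q.2| ^ p * w q.2)
        (Icc (-R) R ×ˢ Icc 0 t) := by
    intro t ht
    have h1 : ContinuousOn (fun q : ℝ × ℝ => U (q.1 + q.2) q.2)
        (Icc (-R) R ×ˢ Icc 0 t) := by
      exact hUc.comp (f := fun q : ℝ × ℝ => ((q.1 + q.2, q.2) : ℝ × ℝ))
        (Continuous.continuousOn ((continuous_fst.add continuous_snd).prodMk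
          continuous_snd))
        (fun z hz => ⟨mem_univ _, ⟨hz.2.1, hz.2.2.trans ht.2⟩⟩)
    apply ContinuousOn.mul
    · exact h1.abs.rpow_const (fun z _ => Or.inr (by linarith))
    · apply ContinuousOn.rpow_const
      · exact (continuous_const.add continuous_snd).continuousOn
      · intro z hz
        exact Or.inl (by have := hz.2.1; intro h0; linarith)
  have hHcont : ContinuousOn Hf (Icc 0 T) := by
    apply continuousOn_param_integral hRR isCompact_Icc
    exact hUc.comp (f := fun z : ℝ × ℝ => ((z.2 + z.1, z.1) : ℝ × ℝ))
      (Continuous.continuousOn ((continuous_snd.add continuous_fst).prodMk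
        continuous_fst)) (fun z hz => ⟨mem_univ _, hz.1⟩)
  have hPcont : ContinuousOn Pf (Icc 0 T) := by
    apply continuousOn_param_integral hRR isCompact_Icc
    have h1 : ContinuousOn (fun z : ℝ × ℝ => U (z.2 + z.1) z.1) (Icc 0 T ×ˢ Icc (-R) R) :=
      hUc.comp (f := fun z : ℝ × ℝ => ((z.2 + z.1, z.1) : ℝ × ℝ))
        (Continuous.continuousOn ((continuous_snd.add continuous_fst).prodMk
          continuous_fst)) (fun z hz => ⟨mem_univ _, hz.1⟩)
    exact h1.abs.rpow_const (fun z _ => Or.inr (by linarith))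
  -- Step 3 : pointwise lower bound for the Duhamel term
  have hWdenc : ∀ ξ : ℝ, Continuous (fun s : ℝ => Wden a b ξ s) := by
    intro ξ
    have hj1 : Continuous (fun s : ℝ => jb (s + jb (ξ + s))) :=
      continuous_jb.comp (continuous_id.add (continuous_jb.comp
        (continuous_const.add continuous_id)))
    have hj2 : Continuous (fun s : ℝ => jb (s - jb (ξ + s))) :=
      continuous_jb.comp (continuous_id.sub (continuous_jb.comp
        (continuous_const.add continuous_id)))
    exact (hj1.rpow_const fun x => Or.inl (jb_pos _).ne').mul
      (hj2.rpow_const fun x => Or.inl (jb_pos _).ne' )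
  have step3 : ∀ t ∈ Icc (0:ℝ) T, ∀ ξ ∈ Icc (-R) R,
      (1/(2*K)) * (∫ s in (0:ℝ)..t, |U (ξ+s) s| ^ p * w s) ≤
        Lab' a b (fun y s => |U y s| ^ p) (ξ+t) t := by
    intro t ht ξ hξ
    have hξabs : |ξ| ≤ R := abs_le.mpr ⟨hξ.1, hξ.2⟩
    have hUcs : ContinuousOn (fun s : ℝ => |U (ξ+s) s| ^ p) (Icc 0 t) :=
      (hUst2 t ht ξ).abs.rpow_const (fun z _ => Or.inr (by linarith))
    have hwc : ContinuousOn w (Icc 0 t) := by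
      apply ContinuousOn.rpow_const (continuous_const.add continuous_id).continuousOn
      intro z hz
      exact Or.inl (by have := hz.1; intro h0; change (1:ℝ) + z = 0 at h0; linarith)
    -- pointwise bound
    have hptw : ∀ s ∈ Icc (0:ℝ) t, (1/K) * (|U (ξ+s) s| ^ p * w s) ≤
        |U (ξ+s) s| ^ p / Wden a b ξ s := by
      intro s hs
      have hq0 : (0:ℝ) ≤ |U (ξ+s) s| ^ p := Real.rpow_nonneg (abs_nonneg _) p
      have hX : (0:ℝ) < (1+s) ^ (1+a) := Real.rpow_pos_of_pos (by linarith [hs.1]) _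
      have hws : w s = ((1+s) ^ (1+a))⁻¹ := by
        show (1+s) ^ (-1-a) = _
        rw [show (-1-a : ℝ) = -(1+a) by ring, Real.rpow_neg (by linarith [hs.1])]
      have h1 : |U (ξ+s) s| ^ p / (K * (1+s) ^ (1+a)) ≤ |U (ξ+s) s| ^ p / Wden a b ξ s :=
        div_le_div_of_nonneg_left hq0 (Wden_pos a b ξ s) (Wden_le a b R s ξ hR hs.1 hξabs)
      calc (1/K) * (|U (ξ+s) s| ^ p * w s) = |U (ξ+s) s| ^ p / (K * (1+s) ^ (1+a)) := by
            rw [hws]; field_simp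
      _ ≤ _ := h1
    -- integral bound
    have hmono : ∫ s in (0:ℝ)..t, (1/K) * (|U (ξ+s) s| ^ p * w s) ≤
        ∫ s in (0:ℝ)..t, |U (ξ+s) s| ^ p / Wden a b ξ s := by
      apply intervalIntegral.integral_mono_on ht.1
      · apply ContinuousOn.intervalIntegrable
        rw [uIcc_of_le ht.1]
        exact continuousOn_const.mul (hUcs.mul hwc)
      · apply ContinuousOn.intervalIntegrable
        rw [uIcc_of_le ht.1]
        apply hUcs.div ((hWdenc ξ).continuousOn)
        intro z _
        exact (Wden_pos a b ξ z).ne'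
      · exact hptw
    -- the two pieces of Lab'
    have hI2 : (∫ s in (0:ℝ)..t,
        (fun y s => |U y s| ^ p) (ξ + t - t + s) s /
          (jb (s + jb (ξ + t - t + s)) ^ (1 + a) * jb (s - jb (ξ + t - t + s)) ^ (1 + b)))
        = ∫ s in (0:ℝ)..t, |U (ξ+s) s| ^ p / Wden a b ξ s := by
      congr 1
      funext s
      rw [show ξ + t - t + s = ξ + s by ring]
      rfl
    have hI1 : 0 ≤ ∫ s in (0:ℝ)..t,
        (fun y s => |U y s| ^ p) (ξ + t + t - s) s /
          (jb (s + jb (ξ + t + t - s)) ^ (1 + a) * jb (s - jb (ξ + t + t - s)) ^ (1 + b)) := by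
      apply intervalIntegral.integral_nonneg ht.1
      intro s _
      apply div_nonneg (Real.rpow_nonneg (abs_nonneg _) p)
      exact (mul_pos (Real.rpow_pos_of_pos (jb_pos _) _)
        (Real.rpow_pos_of_pos (jb_pos _) _)).le
    have hLab : Lab' a b (fun y s => |U y s| ^ p) (ξ+t) t =
        (1/2) * (∫ s in (0:ℝ)..t,
          (fun y s => |U y s| ^ p) (ξ + t + t - s) s /
            (jb (s + jb (ξ + t + t - s)) ^ (1 + a) * jb (s - jb (ξ + t + t - s)) ^ (1 + b)))
        + (1/2) * (∫ s in (0:ℝ)..t, |U (ξ+s) s| ^ p / Wden a b ξ s) := by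
      rw [Lab', hI2]
    rw [hLab]
    have hconst : ∫ s in (0:ℝ)..t, (1/K) * (|U (ξ+s) s| ^ p * w s) =
        (1/K) * ∫ s in (0:ℝ)..t, |U (ξ+s) s| ^ p * w s :=
      intervalIntegral.integral_const_mul _ _
    rw [hconst] at hmono
    have heq2 : (1/(2*K)) * (∫ s in (0:ℝ)..t, |U (ξ+s) s| ^ p * w s) =
        (1/2) * ((1/K) * ∫ s in (0:ℝ)..t, |U (ξ+s) s| ^ p * w s) := by ring
    rw [heq2]
    have h3 := mul_le_mul_of_nonneg_left hmono (by norm_num : (0:ℝ) ≤ 1/2)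
    linarith
  -- Step 4 : the data term
  have hf' : Continuous (deriv f) := hf.continuous_deriv one_le_two
  have hderiv0 : ∀ x : ℝ, R < |x| → deriv f x = 0 := by
    intro x hx
    have hopen : IsOpen {y : ℝ | R < |y|} := isOpen_lt continuous_const continuous_abs
    have hev : f =ᶠ[nhds x] (fun _ => (0:ℝ)) := by
      filter_upwards [hopen.mem_nhds hx] with y hy using hsf y hy
    rw [hev.deriv_eq, deriv_const]
  have hfR : f R = 0 := by
    have h1 : Filter.Tendsto f (nhdsWithin R (Ioi R)) (nhds (f R)) :=
      (hf.continuous.continuousAt).continuousWithinAt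
    have h2 : Filter.Tendsto f (nhdsWithin R (Ioi R)) (nhds 0) := by
      apply Filter.Tendsto.congr' _ tendsto_const_nhds
      filter_upwards [self_mem_nhdsWithin] with y hy
      have hy' : R < y := mem_Ioi.mp hy
      exact (hsf y (by rw [abs_of_pos (by linarith)]; exact hy')).symm
    exact tendsto_nhds_unique h1 h2
  have hfmR : f (-R) = 0 := by
    have h1 : Filter.Tendsto f (nhdsWithin (-R) (Iio (-R))) (nhds (f (-R))) :=
      (hf.continuous.continuousAt).continuousWithinAt
    have h2 : Filter.Tendsto f (nhdsWithin (-R) (Iio (-R))) (nhds 0) := by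
      apply Filter.Tendsto.congr' _ tendsto_const_nhds
      filter_upwards [self_mem_nhdsWithin] with y hy
      have hy' : y < -R := mem_Iio.mp hy
      exact (hsf y (by rw [abs_of_neg (by linarith)]; linarith)).symm
    exact tendsto_nhds_unique h1 h2
  have step4 : ∀ t ∈ Icc t₀ T, (∫ ξ in (-R)..R, ut0 f g (ξ+t) t) = cg := by
    intro t ht
    have htt : R + 1 ≤ t := by have := ht.1; rw [ht₀def] at this; linarith
    have hcongr : EqOn (fun ξ : ℝ => ut0 f g (ξ+t) t)
        (fun ξ : ℝ => (1/2) * (g ξ - deriv f ξ)) (uIcc (-R) R) := by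
      intro ξ hξ
      rw [uIcc_of_le hRR] at hξ
      have hgt : R < ξ + t + t := by have := hξ.1; linarith
      have habs : R < |ξ + t + t| := lt_of_lt_of_le hgt (le_abs_self _)
      show ut0 f g (ξ+t) t = _
      rw [ut0, show ξ + t - t = ξ by ring, hderiv0 _ habs, hsg _ habs]
      ring
    rw [intervalIntegral.integral_congr hcongr]
    have hgi' : IntervalIntegrable g volume (-R) R := hg.continuous.intervalIntegrable _ _
    have hfi' : IntervalIntegrable (deriv f) volume (-R) R := hf'.intervalIntegrable _ _
    rw [intervalIntegral.integral_const_mul, intervalIntegral.integral_sub hgi' hfi']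
    rw [intervalIntegral.integral_deriv_eq_sub
      (fun x _ => (hf.differentiable (by norm_num)).differentiableAt) hfi', hfR, hfmR]
    have hgeq : (∫ ξ in (-R)..R, g ξ) = ∫ x : ℝ, g x := by
      rw [intervalIntegral.integral_of_le hRR, ← integral_Icc_eq_integral_Ioc]
      apply setIntegral_eq_integral_of_forall_compl_eq_zero
      intro x hx
      apply hsg
      by_contra hcon
      push_neg at hcon
      exact hx ⟨(abs_le.mp hcon).1, (abs_le.mp hcon).2⟩
    rw [hgeq, hcgdef]
    ring
  -- Step 5 : integrated inequality
  have step5 : ∀ t ∈ Icc t₀ T,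
      ε * cg + (1/(2*K)) * (∫ s in (0:ℝ)..t, Pf s * w s) ≤ Hf t := by
    intro t ht
    have h0t : (0:ℝ) ≤ t := by have := ht.1; rw [ht₀def] at this; linarith
    have ht0T : t ∈ Icc (0:ℝ) T := ⟨h0t, ht.2⟩
    have hut0c : Continuous (fun ξ : ℝ => ut0 f g (ξ+t) t) := by
      simp only [ut0]
      apply continuous_const.mul
      exact (((hf'.comp ((continuous_id.add continuous_const).add continuous_const)).sub
        (hf'.comp ((continuous_id.add continuous_const).sub continuous_const))).add
        (hg.continuous.comp ((continuous_id.add continuous_const).add continuous_const))).add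
        (hg.continuous.comp ((continuous_id.add continuous_const).sub continuous_const))
    have hi1 : IntervalIntegrable (fun ξ : ℝ => ε * ut0 f g (ξ+t) t) volume (-R) R :=
      (continuous_const.mul hut0c).intervalIntegrable _ _
    have hLabc : ContinuousOn (fun ξ : ℝ => Lab' a b (fun y s => |U y s| ^ p) (ξ+t) t)
        (uIcc (-R) R) := by
      have he : (fun ξ : ℝ => Lab' a b (fun y s => |U y s| ^ p) (ξ+t) t) =
          fun ξ => U (ξ+t) t - ε * ut0 f g (ξ+t) t := by
        funext ξ
        rw [hUeq (ξ+t) t h0t ht.2]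
        ring
      rw [he]
      exact ((hUst t ht0T).mono (subset_univ _)).sub (continuous_const.mul hut0c).continuousOn
    have hi2 : IntervalIntegrable (fun ξ : ℝ => Lab' a b (fun y s => |U y s| ^ p) (ξ+t) t)
        volume (-R) R := hLabc.intervalIntegrable
    have hdecomp : Hf t = (∫ ξ in (-R)..R, ε * ut0 f g (ξ+t) t)
        + ∫ ξ in (-R)..R, Lab' a b (fun y s => |U y s| ^ p) (ξ+t) t := by
      have e0 : Hf t = ∫ ξ in (-R)..R, U (ξ+t) t := rfl
      rw [e0, intervalIntegral.integral_congr
        (g := fun ξ : ℝ => ε * ut0 f g (ξ+t) t + Lab' a b (fun y s => |U y s| ^ p) (ξ+t) t)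
        (fun ξ _ => hUeq (ξ+t) t h0t ht.2)]
      exact intervalIntegral.integral_add hi1 hi2
    have hdata : (∫ ξ in (-R)..R, ε * ut0 f g (ξ+t) t) = ε * cg := by
      rw [intervalIntegral.integral_const_mul, step4 t ht]
    have hFc := hFrect t ht0T
    have hinner_cont : ContinuousOn (fun ξ : ℝ => ∫ s in (0:ℝ)..t, |U (ξ+s) s| ^ p * w s)
        (Icc (-R) R) := continuousOn_param_integral h0t isCompact_Icc hFc
    have hlb : (∫ ξ in (-R)..R, (1/(2*K)) * ∫ s in (0:ℝ)..t, |U (ξ+s) s| ^ p * w s)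
        ≤ ∫ ξ in (-R)..R, Lab' a b (fun y s => |U y s| ^ p) (ξ+t) t := by
      apply intervalIntegral.integral_mono_on hRR
      · apply ContinuousOn.intervalIntegrable
        rw [uIcc_of_le hRR]
        exact continuousOn_const.mul hinner_cont
      · exact hi2
      · intro ξ hξ
        exact step3 t ht0T ξ hξ
    have hpull : (∫ ξ in (-R)..R, (1/(2*K)) * ∫ s in (0:ℝ)..t, |U (ξ+s) s| ^ p * w s)
        = (1/(2*K)) * ∫ ξ in (-R)..R, ∫ s in (0:ℝ)..t, |U (ξ+s) s| ^ p * w s :=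
      intervalIntegral.integral_const_mul _ _
    have hswap : (∫ ξ in (-R)..R, ∫ s in (0:ℝ)..t, |U (ξ+s) s| ^ p * w s)
        = ∫ s in (0:ℝ)..t, Pf s * w s := by
      rw [integral_integral_swap_cont hRR h0t hFc]
      apply intervalIntegral.integral_congr
      intro s _
      exact intervalIntegral.integral_mul_const _ _
    rw [hpull, hswap] at hlb
    linarith [hdecomp, hdata, hlb]
  -- Step 6
  have step6 : ∀ t ∈ Icc t₀ T, ε * cg ≤ Hf t := by
    intro t ht
    have h5 := step5 t ht
    have h0t : (0:ℝ) ≤ t := by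
      have := ht.1; rw [ht₀def] at this; linarith
    have hnn : 0 ≤ ∫ s in (0:ℝ)..t, Pf s * w s := by
      apply intervalIntegral.integral_nonneg h0t
      intro s hs
      exact mul_nonneg (hP0 s) (hwpos s hs.1).le
    linarith [mul_nonneg (by positivity : (0:ℝ) ≤ 1/(2*K)) hnn]
  -- Step 7 : Hölder
  have step7 : ∀ s ∈ Icc t₀ T, (2*R) ^ (1-p) * Hf s ^ p ≤ Pf s := by
    intro s hs
    have hs0T : s ∈ Icc (0:ℝ) T := ⟨by have := hs.1; rw [ht₀def] at this; linarith, hs.2⟩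
    have habs_cont : ContinuousOn (fun ξ : ℝ => |U (ξ+s) s|) (Icc (-R) R) :=
      ((hUst s hs0T).mono (subset_univ _)).abs
    have hH0 : 0 ≤ Hf s := le_trans (mul_pos hε hcg).le (step6 s hs)
    have hmono : Hf s ≤ ∫ ξ in (-R)..R, |U (ξ+s) s| := by
      apply intervalIntegral.integral_mono_on hRR
      · apply ContinuousOn.intervalIntegrable
        rw [uIcc_of_le hRR]
        exact (hUst s hs0T).mono (subset_univ _)
      · apply ContinuousOn.intervalIntegrable
        rw [uIcc_of_le hRR]
        exact habs_cont
      · intro x _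
        exact le_abs_self _
    have hJ := jensen_rpow (le_of_lt hp) hR0 habs_cont (fun x => abs_nonneg _)
    have h1 : Hf s ^ p ≤ (∫ ξ in (-R)..R, |U (ξ+s) s|) ^ p :=
      Real.rpow_le_rpow hH0 hmono (by linarith)
    have h2 : Hf s ^ p ≤ (2*R) ^ (p-1) * Pf s := le_trans h1 hJ
    have h2R : (0:ℝ) < 2*R := by linarith
    calc (2*R)^(1-p) * Hf s ^ p ≤ (2*R)^(1-p) * ((2*R)^(p-1) * Pf s) :=
          mul_le_mul_of_nonneg_left h2 (Real.rpow_pos_of_pos h2R (1-p)).le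
    _ = Pf s := by
        rw [← mul_assoc, ← Real.rpow_add h2R, show (1-p)+(p-1) = (0:ℝ) by ring,
          Real.rpow_zero, one_mul]
  -- Step 8
  have hHpwc : ContinuousOn (fun s : ℝ => Hf s ^ p * w s) (Icc t₀ T) := by
    apply ContinuousOn.mul
    · exact (hHcont.mono (Icc_subset_Icc (by linarith) le_rfl)).rpow_const
        (fun z _ => Or.inr (by linarith))
    · exact hwT.mono (Icc_subset_Icc (by linarith) le_rfl)
  have step8 : ∀ t ∈ Icc t₀ T,
      ε * cg + c * (∫ s in t₀..t, Hf s ^ p * w s) ≤ Hf t := by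
    intro t ht
    have h0t : (0:ℝ) ≤ t := by have := ht.1; rw [ht₀def] at this; linarith
    have h5 := step5 t ht
    have hPwc : ContinuousOn (fun s : ℝ => Pf s * w s) (Icc 0 T) := hPcont.mul hwT
    have hint1 : IntervalIntegrable (fun s : ℝ => Pf s * w s) volume 0 t₀ := by
      apply ContinuousOn.intervalIntegrable
      rw [uIcc_of_le ht₀pos.le]
      exact hPwc.mono (Icc_subset_Icc le_rfl ht₀T)
    have hint2 : IntervalIntegrable (fun s : ℝ => Pf s * w s) volume t₀ t := by
      apply ContinuousOn.intervalIntegrable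
      rw [uIcc_of_le ht.1]
      exact hPwc.mono (Icc_subset_Icc ht₀pos.le ht.2)
    have hsplit : (∫ s in (0:ℝ)..t, Pf s * w s) =
        (∫ s in (0:ℝ)..t₀, Pf s * w s) + ∫ s in t₀..t, Pf s * w s :=
      (intervalIntegral.integral_add_adjacent_intervals hint1 hint2).symm
    have hnn1 : 0 ≤ ∫ s in (0:ℝ)..t₀, Pf s * w s := by
      apply intervalIntegral.integral_nonneg ht₀pos.le
      intro s hss
      exact mul_nonneg (hP0 s) (hwpos s hss.1).le
    have hmono2 : (∫ s in t₀..t, (2*R) ^ (1-p) * (Hf s ^ p * w s)) ≤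
        ∫ s in t₀..t, Pf s * w s := by
      apply intervalIntegral.integral_mono_on ht.1
      · apply ContinuousOn.intervalIntegrable
        rw [uIcc_of_le ht.1]
        exact continuousOn_const.mul (hHpwc.mono (Icc_subset_Icc le_rfl ht.2))
      · exact hint2
      · intro s hss
        have hsIcc : s ∈ Icc t₀ T := ⟨hss.1, le_trans hss.2 ht.2⟩
        have h7 := step7 s hsIcc
        have hws : 0 ≤ w s := (hwpos s (by have := hss.1; rw [ht₀def] at this; linarith)).le
        calc (2*R) ^ (1-p) * (Hf s ^ p * w s) = ((2*R) ^ (1-p) * Hf s ^ p) * w s := by ring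
        _ ≤ Pf s * w s := mul_le_mul_of_nonneg_right h7 hws
    have hpull2 : (∫ s in t₀..t, (2*R) ^ (1-p) * (Hf s ^ p * w s)) =
        (2*R) ^ (1-p) * ∫ s in t₀..t, Hf s ^ p * w s :=
      intervalIntegral.integral_const_mul _ _
    rw [hpull2] at hmono2
    have hchain : c * (∫ s in t₀..t, Hf s ^ p * w s) ≤
        (1/(2*K)) * ∫ s in (0:ℝ)..t, Pf s * w s := by
      have e1 : c * (∫ s in t₀..t, Hf s ^ p * w s) =
          (1/(2*K)) * ((2*R) ^ (1-p) * ∫ s in t₀..t, Hf s ^ p * w s) := by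
        rw [hcdef]; ring
      rw [e1, hsplit]
      have h2K : (0:ℝ) ≤ 1/(2*K) := by positivity
      linarith [mul_le_mul_of_nonneg_left hmono2 h2K, mul_nonneg h2K hnn1]
    linarith
  -- ODE argument
  set q : ℝ → ℝ := fun s => Hf s ^ p * w s with hqdef
  have hqcont : ContinuousOn q (Icc t₀ T) := by
    apply ContinuousOn.mul
    · exact (hHcont.mono (Icc_subset_Icc (by linarith) le_rfl)).rpow_const
        (fun z _ => Or.inr (by linarith))
    · apply ContinuousOn.rpow_const (continuous_const.add continuous_id).continuousOn
      intro z hz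
      exact Or.inl (by have := hz.1; intro h0; change (1:ℝ) + z = 0 at h0; linarith)
  have hqnn : ∀ s ∈ Icc t₀ T, 0 ≤ q s := by
    intro s hs
    apply mul_nonneg
    · exact Real.rpow_nonneg (le_trans (mul_pos hε hcg).le (step6 s hs)) p
    · exact (hwpos s (by have := hs.1; linarith)).le
  set Φ : ℝ → ℝ := fun t => ε * cg + c * (∫ s in t₀..t, q s) with hΦdef
  have hΦpos : ∀ t ∈ Icc t₀ T, 0 < Φ t := by
    intro t ht
    have hnn : 0 ≤ ∫ s in t₀..t, q s := by
      apply intervalIntegral.integral_nonneg ht.1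
      intro s hs
      exact hqnn s ⟨hs.1, le_trans hs.2 ht.2⟩
    have h2 : Φ t = ε * cg + c * ∫ s in t₀..t, q s := rfl
    rw [h2]
    have : 0 < ε * cg := mul_pos hε hcg
    linarith [mul_nonneg hc.le hnn]
  have hΦH : ∀ t ∈ Icc t₀ T, Φ t ≤ Hf t := step8
  have hΦcont : ContinuousOn Φ (Icc t₀ T) := by
    apply ContinuousOn.add continuousOn_const
    apply ContinuousOn.mul continuousOn_const
    have hint : IntegrableOn q (uIcc t₀ T) volume := by
      rw [uIcc_of_le ht₀T]
      exact hqcont.integrableOn_compact isCompact_Icc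
    have := intervalIntegral.continuousOn_primitive_interval hint
    rwa [uIcc_of_le ht₀T] at this
  have hΦderiv : ∀ t ∈ Ioo t₀ T, HasDerivAt Φ (c * q t) t := by
    intro t ht
    have hmem : Icc t₀ T ∈ nhds t := Icc_mem_nhds ht.1 ht.2
    have hqi : IntervalIntegrable q volume t₀ t := by
      apply ContinuousOn.intervalIntegrable
      rw [uIcc_of_le ht.1.le]
      exact hqcont.mono (Icc_subset_Icc le_rfl ht.2.le)
    have hd : HasDerivAt (fun u => ∫ s in t₀..u, q s) (q t) t :=
      intervalIntegral.integral_hasDerivAt_right hqi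
        ⟨Icc t₀ T, hmem, hqcont.aestronglyMeasurable measurableSet_Icc⟩
        (hqcont.continuousAt hmem)
    exact (hd.const_mul c).const_add (ε * cg)
  set G : ℝ → ℝ := fun t => Φ t ^ (1-p) + (p-1) * c * ((1+t) ^ (-a) / (-a)) with hGdef
  have hGderiv : ∀ t ∈ Ioo t₀ T, HasDerivAt G
      ((1-p) * Φ t ^ (-p) * (c * q t) + (p-1) * c * w t) t := by
    intro t ht
    have htIcc : t ∈ Icc t₀ T := ⟨ht.1.le, ht.2.le⟩
    have hΦt : 0 < Φ t := hΦpos t htIcc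
    have h1t : (0:ℝ) < 1 + t := by have := ht.1; linarith
    have hwe : w t = (1+t) ^ (-a-1) := by
      show (1+t) ^ (-1-a) = _
      rw [show (-a-1 : ℝ) = -1-a by ring]
    have hd1 := (hΦderiv t ht).rpow_const (p := 1-p) (Or.inl hΦt.ne')
    have e1 : c * q t * (1-p) * Φ t ^ (1-p-1) = (1-p) * Φ t ^ (-p) * (c * q t) := by
      rw [show (1-p-1 : ℝ) = -p by ring]
      ring
    rw [e1] at hd1
    have hd2 : HasDerivAt (fun u : ℝ => 1 + u) 1 t := by
      simpa using (hasDerivAt_id t).const_add (1:ℝ)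
    have hd3 := hd2.rpow_const (p := -a) (Or.inl h1t.ne')
    have hd4 := (hd3.div_const (-a)).const_mul ((p-1)*c)
    have e2 : (p-1) * c * (1 * (-a) * (1+t) ^ (-a-1) / (-a)) = (p-1) * c * w t := by
      rw [hwe]
      field_simp
    rw [e2] at hd4
    exact hd1.add hd4
  have hGderiv_nonpos : ∀ t ∈ Ioo t₀ T,
      (1-p) * Φ t ^ (-p) * (c * q t) + (p-1) * c * w t ≤ 0 := by
    intro t ht
    have htIcc : t ∈ Icc t₀ T := ⟨ht.1.le, ht.2.le⟩
    have hΦt : 0 < Φ t := hΦpos t htIcc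
    have hwt : 0 < w t := hwpos t (by have := ht.1; rw [ht₀def] at this; linarith)
    have hHΦ : Φ t ≤ Hf t := hΦH t htIcc
    have hΦp : Φ t ^ p ≤ Hf t ^ p := Real.rpow_le_rpow hΦt.le hHΦ (by linarith)
    have hΦpp : (0:ℝ) < Φ t ^ p := Real.rpow_pos_of_pos hΦt p
    have hkey : 1 ≤ Φ t ^ (-p) * Hf t ^ p := by
      rw [Real.rpow_neg hΦt.le, inv_mul_eq_div, le_div_iff₀ hΦpp, one_mul]
      exact hΦp
    have hqe : q t = Hf t ^ p * w t := rfl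
    have e : (1-p) * Φ t ^ (-p) * (c * q t) + (p-1) * c * w t
        = ((p-1) * c * w t) * (1 - Φ t ^ (-p) * Hf t ^ p) := by
      rw [hqe]; ring
    rw [e]
    have h1 : 0 ≤ (p-1) * c * w t := by positivity
    linarith [mul_nonneg h1 (sub_nonneg.mpr hkey)]
  have hGanti : AntitoneOn G (Icc t₀ T) := by
    apply antitoneOn_of_deriv_nonpos (convex_Icc t₀ T)
    · apply ContinuousOn.add
      · exact hΦcont.rpow_const (fun z hz => Or.inl (hΦpos z hz).ne')
      · apply ContinuousOn.mul continuousOn_const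
        apply ContinuousOn.div_const
        apply ContinuousOn.rpow_const (continuous_const.add continuous_id).continuousOn
        intro z hz
        have hz1 : t₀ ≤ z := hz.1
        exact Or.inl (by intro h0; change (1:ℝ) + z = 0 at h0; linarith)
    · rw [interior_Icc]
      intro t ht
      exact ((hGderiv t ht).differentiableAt).differentiableWithinAt
    · rw [interior_Icc]
      intro t ht
      rw [(hGderiv t ht).deriv]
      exact hGderiv_nonpos t ht
  have hGT : G T ≤ G t₀ := hGanti ⟨le_refl t₀, ht₀T⟩ ⟨ht₀T, le_refl T⟩ ht₀T
  -- final arithmetic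
  have hΦt₀ : Φ t₀ = ε * cg := by
    have e : Φ t₀ = ε * cg + c * ∫ s in t₀..t₀, q s := rfl
    rw [e, intervalIntegral.integral_same, mul_zero, add_zero]
  have hGt₀ : G t₀ = (ε * cg) ^ (1-p) + (p-1) * c * ((1+t₀) ^ (-a) / (-a)) := by
    have e : G t₀ = Φ t₀ ^ (1-p) + (p-1) * c * ((1+t₀) ^ (-a) / (-a)) := rfl
    rw [e, hΦt₀]
  have hGTe : G T = Φ T ^ (1-p) + (p-1) * c * ((1+T) ^ (-a) / (-a)) := rfl
  have hΦT : 0 < Φ T ^ (1-p) :=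
    Real.rpow_pos_of_pos (hΦpos T ⟨ht₀T, le_refl T⟩) _
  have hmain : (p-1) * c * ((1+T) ^ (-a) / (-a)) <
      (ε*cg) ^ (1-p) + (p-1) * c * ((1+t₀) ^ (-a) / (-a)) := by
    rw [hGTe, hGt₀] at hGT
    linarith
  -- lower bound for (1+T)^(-a)
  have hTm : C * ε ^ (-((p-1)/(-a))) ≤ 1 + T := by
    have := hT
    linarith
  have h1T : (0:ℝ) < C * ε ^ (-((p-1)/(-a))) :=
    mul_pos hCpos (Real.rpow_pos_of_pos hε _)
  have hrp1 : (C * ε ^ (-((p-1)/(-a)))) ^ (-a) ≤ (1+T) ^ (-a) :=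
    Real.rpow_le_rpow h1T.le hTm ha0.le
  have hrp2 : (C * ε ^ (-((p-1)/(-a)))) ^ (-a) = C ^ (-a) * ε ^ (1-p) := by
    rw [Real.mul_rpow hCpos.le (Real.rpow_pos_of_pos hε _).le]
    congr 1
    rw [← Real.rpow_mul hε.le]
    congr 1
    field_simp
    ring
  have hε1p : 1 ≤ ε ^ (1-p) :=
    Real.one_le_rpow_of_pos_of_le_one_of_nonpos hε hε1 (by linarith)
  have ht₀a : (0:ℝ) < (1+t₀) ^ (-a) := Real.rpow_pos_of_pos (by linarith) _
  have hsub : (B + 1) * ε ^ (1-p) ≤ (1+T) ^ (-a) - (1+t₀) ^ (-a) := by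
    have h1 : C ^ (-a) * ε ^ (1-p) ≤ (1+T) ^ (-a) := by
      rw [← hrp2]; exact hrp1
    have h2 : (1+t₀) ^ (-a) ≤ (1+t₀) ^ (-a) * ε ^ (1-p) := by
      have h3 := mul_le_mul_of_nonneg_left hε1p ht₀a.le
      rw [mul_one] at h3
      exact h3
    rw [hCa] at h1
    have h4 : ((1+t₀) ^ (-a) + B + 1) * ε ^ (1-p) =
        (1+t₀) ^ (-a) * ε ^ (1-p) + (B+1) * ε ^ (1-p) := by ring
    rw [h4] at h1
    linarith [h1, h2]
  set D : ℝ := (p-1) * c / (-a) with hDdef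
  have hD : 0 < D := div_pos (mul_pos hp1 hc) ha0
  have hDB : D * B = cg ^ (1-p) := by
    rw [hDdef, hBdef]
    field_simp
  have hrew : ∀ X : ℝ, (p-1) * c * (X / (-a)) = D * X := by
    intro X
    rw [hDdef]
    ring
  rw [hrew, hrew] at hmain
  have hεcg : (ε*cg) ^ (1-p) = ε ^ (1-p) * cg ^ (1-p) := Real.mul_rpow hε.le hcg.le
  have hDε : 0 < D * ε ^ (1-p) := mul_pos hD (Real.rpow_pos_of_pos hε _)
  have hx : D * ((B+1) * ε ^ (1-p)) ≤ D * ((1+T) ^ (-a) - (1+t₀) ^ (-a)) :=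
    mul_le_mul_of_nonneg_left hsub hD.le
  have e1 : D * ((B+1) * ε ^ (1-p)) = (D*B) * ε ^ (1-p) + D * ε ^ (1-p) := by ring
  rw [e1, hDB] at hx
  linarith [hmain, hx, hDε, hεcg]
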